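/- For the guarded composition F of operator-valued functions F_1,...,F_n along {|i⟩} and any |Φ⟩ = ∑_i |i⟩⊗|φ_i⟩, |Ψ⟩ = ∑_i |i⟩⊗|ψ_i⟩ in H_C ⊗ H: ∑_{(δ_1,...,δ_n)} ⟨Φ| F(δ_1,...,δ_n)† F(δ_1,...,δ_n) |Ψ⟩ = ∑_{i=1}^n ⟨φ_i| (∑_{δ_i∈Δ_i} F_i(δ_i)† F_i(δ_i)) |ψ_i⟩. -/

import Mathlib

noncomputable section
open scoped InnerProductSpace
open Finset

/-- Coordinate model of the tensor product `H_C ⊗ H` along a fixed orthonormal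
basis of the `n`-dimensional coin space `H_C`. -/
abbrev TensorSp (n : ℕ) (H : Type*) [NormedAddCommGroup H] [InnerProductSpace ℂ H] : Type _ :=
  PiLp 2 (fun _ : Fin n => H)

variable {n : ℕ} {H : Type*} [NormedAddCommGroup H] [InnerProductSpace ℂ H]

/-- the pure tensor `c ⊗ ψ`. -/
def pureTensor (c : EuclideanSpace ℂ (Fin n)) (ψ : H) : TensorSp n H :=
  WithLp.toLp 2 (fun i => c i • ψ)

/-- the block-diagonal operator `∑ᵢ |i⟩⟨i| ⊗ Uᵢ`, i.e. the guarded composition of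
the `Uᵢ` along the computational basis of the coin space. -/
def blockDiag (U : Fin n → (H →ₗ[ℂ] H)) : TensorSp n H →ₗ[ℂ] TensorSp n H where
  toFun x := WithLp.toLp 2 (fun i => U i (x i))
  map_add' x y := WithLp.ofLp_injective 2 <| funext fun i => map_add (U i) _ _
  map_smul' c x := WithLp.ofLp_injective 2 <| funext fun i => map_smul (U i) _ _

/-- `A ⊗ B` in the coordinate model, `A` acting on the coin space. -/
def tensorOp (A : EuclideanSpace ℂ (Fin n) →ₗ[ℂ] EuclideanSpace ℂ (Fin n))
    (B : H →ₗ[ℂ] H) : TensorSp n H →ₗ[ℂ] TensorSp n H where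
  toFun x := WithLp.toLp 2 (fun i => ∑ b : Fin n, A (EuclideanSpace.single b 1) i • B (x b))
  map_add' x y := WithLp.ofLp_injective 2 <| funext fun i => by
    simp [map_add, smul_add, Finset.sum_add_distrib]
  map_smul' c x := WithLp.ofLp_injective 2 <| funext fun i => by
    simp [map_smul, Finset.smul_sum, smul_comm c]

/-- `A ⊗ I_H`. -/
def tensorLeft (A : EuclideanSpace ℂ (Fin n) →ₗ[ℂ] EuclideanSpace ℂ (Fin n)) :
    TensorSp n H →ₗ[ℂ] TensorSp n H :=
  tensorOp A LinearMap.id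

/-- A linear operator is unitary iff it preserves inner products and is bijective. -/
def IsUnitaryOp {E : Type*} [NormedAddCommGroup E] [InnerProductSpace ℂ E]
    (A : E →ₗ[ℂ] E) : Prop :=
  (∀ x y : E, ⟪A x, A y⟫_ℂ = ⟪x, y⟫_ℂ) ∧ Function.Bijective A

/-- Positive (semidefinite) operator. -/
def IsPosOp {E : Type*} [NormedAddCommGroup E] [InnerProductSpace ℂ E]
    (A : E →ₗ[ℂ] E) : Prop :=
  ∀ x : E, (⟪x, A x⟫_ℂ).im = 0 ∧ 0 ≤ (⟪x, A x⟫_ℂ).re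

/-- Löwner order `A ⊑ B`. -/
def Loewner {E : Type*} [NormedAddCommGroup E] [InnerProductSpace ℂ E]
    (A B : E →ₗ[ℂ] E) : Prop :=
  IsPosOp (B - A)

section guarded
variable [FiniteDimensional ℂ H] {Δ : Fin n → Type*} [∀ k, Fintype (Δ k)]

/-- the coefficients `λ_{kδ}`. -/
def lam (F : ∀ k, Δ k → (H →ₗ[ℂ] H)) (k : Fin n) (δ : Δ k) : ℝ :=
  Real.sqrt ((LinearMap.trace ℂ H (LinearMap.adjoint (F k δ) ∘ₗ F k δ)).re /
    ∑ τ : Δ k, (LinearMap.trace ℂ H (LinearMap.adjoint (F k τ) ∘ₗ F k τ)).re)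

/-- the guarded composition `□ᵢ |i⟩ → Fᵢ` of operator-valued functions, evaluated at
`⊕ᵢ δᵢ`. -/
def guardedComp (F : ∀ k, Δ k → (H →ₗ[ℂ] H)) (δ : ∀ k, Δ k) :
    TensorSp n H →ₗ[ℂ] TensorSp n H where
  toFun x := WithLp.toLp 2 (fun i => (∏ k ∈ Finset.univ.erase i, lam F k (δ k)) • F i (δ i) (x i))
  map_add' x y := WithLp.ofLp_injective 2 <| funext fun i => by simp [map_add, smul_add]
  map_smul' c x := WithLp.ofLp_injective 2 <| funext fun i => by
    simp [map_smul, smul_comm c]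

end guarded

/-- partial trace over the coin space of an operator on `H_C ⊗ H`. -/
def coinProj (i : Fin n) : TensorSp n H →ₗ[ℂ] H where
  toFun x := x i
  map_add' _ _ := rfl
  map_smul' _ _ := rfl

def coinIncl (i : Fin n) : H →ₗ[ℂ] TensorSp n H where
  toFun ψ := WithLp.toLp 2 (Pi.single i ψ)
  map_add' x y := by simp [Pi.single_add]
  map_smul' c x := by simp [Pi.single_smul]

def trCoin (A : TensorSp n H →ₗ[ℂ] TensorSp n H) : H →ₗ[ℂ] H :=
  ∑ i : Fin n, coinProj i ∘ₗ A ∘ₗ coinIncl i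

/-- the outer product `|x⟩⟨y|`. -/
def outer {E : Type*} [NormedAddCommGroup E] [InnerProductSpace ℂ E]
    (x y : E) : E →ₗ[ℂ] E :=
  ((innerSL ℂ y).toLinearMap).smulRight x



/-- The trace of `A†A` has nonnegative real part. -/
lemma trace_adj_self_re_nonneg {H : Type*} [NormedAddCommGroup H] [InnerProductSpace ℂ H]
    [FiniteDimensional ℂ H] (A : H →ₗ[ℂ] H) :
    0 ≤ (LinearMap.trace ℂ H (LinearMap.adjoint A ∘ₗ A)).re := by
  classical
  let b := stdOrthonormalBasis ℂ H
  rw [LinearMap.trace_eq_matrix_trace ℂ b.toBasis, Matrix.trace]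
  simp only [Matrix.diag_apply, LinearMap.toMatrix_apply, Complex.re_sum]
  apply Finset.sum_nonneg
  intro i _
  rw [b.coe_toBasis, b.coe_toBasis_repr_apply, b.repr_apply_apply]
  simp only [LinearMap.comp_apply, LinearMap.adjoint_inner_right]
  exact inner_self_nonneg (𝕜 := ℂ) (x := A (b i))

/-- the key inner-product identity for the guarded composition:
`∑_δ ⟨Φ|F(δ)†F(δ)|Ψ⟩ = ∑ᵢ ⟨φᵢ| (∑_{δᵢ} Fᵢ(δᵢ)†Fᵢ(δᵢ)) |ψᵢ⟩`, where `Φ = ∑ᵢ|i⟩⊗φᵢ`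
and `Ψ = ∑ᵢ|i⟩⊗ψᵢ` (so `φᵢ = Φ i`, `ψᵢ = Ψ i` in the coordinate model). -/
theorem guardedComp_inner_identity {n : ℕ} {H : Type*} [NormedAddCommGroup H]
    [InnerProductSpace ℂ H] [FiniteDimensional ℂ H]
    {Δ : Fin n → Type*} [∀ k, Fintype (Δ k)] (F : ∀ k, Δ k → (H →ₗ[ℂ] H))
    (hovf : ∀ k, Loewner (∑ δ : Δ k, LinearMap.adjoint (F k δ) ∘ₗ F k δ) LinearMap.id)
    (hden : ∀ k, (∑ τ : Δ k,
      (LinearMap.trace ℂ H (LinearMap.adjoint (F k τ) ∘ₗ F k τ)).re) ≠ 0)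
    (Φ Ψ : TensorSp n H) :
    ∑ δ : (∀ k, Δ k), ⟪guardedComp F δ Φ, guardedComp F δ Ψ⟫_ℂ
      = ∑ i : Fin n, ⟪Φ i, (∑ δi : Δ i, LinearMap.adjoint (F i δi) ∘ₗ F i δi) (Ψ i)⟫_ℂ := by
  classical
  have gapp : ∀ (δ : ∀ k, Δ k) (x : TensorSp n H) (i : Fin n),
      guardedComp F δ x i = (∏ k ∈ Finset.univ.erase i, lam F k (δ k)) • F i (δ i) (x i) :=
    fun _ _ _ => rfl
  have lamsq : ∀ k : Fin n, ∑ τ : Δ k, (lam F k τ) ^ 2 = 1 := by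
    intro k
    have hS : 0 ≤ ∑ τ : Δ k, (LinearMap.trace ℂ H (LinearMap.adjoint (F k τ) ∘ₗ F k τ)).re :=
      Finset.sum_nonneg fun τ _ => trace_adj_self_re_nonneg _
    have hτ : ∀ τ : Δ k, (lam F k τ) ^ 2 =
        (LinearMap.trace ℂ H (LinearMap.adjoint (F k τ) ∘ₗ F k τ)).re /
        (∑ τ' : Δ k, (LinearMap.trace ℂ H (LinearMap.adjoint (F k τ') ∘ₗ F k τ')).re) :=
      fun τ => Real.sq_sqrt (div_nonneg (trace_adj_self_re_nonneg _) hS)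
    rw [Finset.sum_congr rfl fun τ _ => hτ τ, ← Finset.sum_div, div_self (hden k)]
  set g : ∀ i : Fin n, Δ i → ℂ := fun i a => ⟪F i a (Φ i), F i a (Ψ i)⟫_ℂ with hg
  have hsm : ∀ (r : ℝ) (x y : H), ⟪r • x, r • y⟫_ℂ = ((r ^ 2 : ℝ) : ℂ) * ⟪x, y⟫_ℂ := by
    intro r x y
    rw [← algebraMap_smul ℂ r x, ← algebraMap_smul ℂ r y, Complex.coe_algebraMap,
      inner_smul_left, inner_smul_right, Complex.conj_ofReal]
    push_cast
    ring
  have hterm : ∀ δ : (∀ k, Δ k), ⟪guardedComp F δ Φ, guardedComp F δ Ψ⟫_ℂ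
      = ∑ i : Fin n, ((∏ k ∈ Finset.univ.erase i, (lam F k (δ k)) ^ 2 : ℝ) : ℂ) * g i (δ i) := by
    intro δ
    rw [PiLp.inner_apply]
    refine Finset.sum_congr rfl fun i _ => ?_
    rw [gapp, gapp, hsm, Finset.prod_pow]
  rw [Finset.sum_congr rfl fun δ _ => hterm δ, Finset.sum_comm]
  refine Finset.sum_congr rfl fun i _ => ?_
  have hRHS : ⟪Φ i, (∑ δi : Δ i, LinearMap.adjoint (F i δi) ∘ₗ F i δi) (Ψ i)⟫_ℂ
      = ∑ a : Δ i, g i a := by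
    rw [LinearMap.sum_apply, inner_sum]
    exact Finset.sum_congr rfl fun a _ => by
      simp [hg, LinearMap.comp_apply, LinearMap.adjoint_inner_right]
  rw [hRHS]
  set h : ∀ k : Fin n, Δ k → ℂ := fun k x =>
    if hk : k = i then g i (hk ▸ x) else ((lam F k x) ^ 2 : ℝ) with hh
  have step1 : ∀ δ : (∀ k, Δ k),
      ((∏ k ∈ Finset.univ.erase i, (lam F k (δ k)) ^ 2 : ℝ) : ℂ) * g i (δ i)
        = ∏ k : Fin n, h k (δ k) := by
    intro δ
    rw [← Finset.mul_prod_erase Finset.univ (fun k => h k (δ k)) (Finset.mem_univ i),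
      Complex.ofReal_prod]
    have e1 : h i (δ i) = g i (δ i) := by simp [hh]
    have e2 : ∏ k ∈ Finset.univ.erase i, h k (δ k)
        = ∏ k ∈ Finset.univ.erase i, (((lam F k (δ k)) ^ 2 : ℝ) : ℂ) :=
      Finset.prod_congr rfl fun k hk => by
        simp [hh, dif_neg (Finset.ne_of_mem_erase hk)]
    rw [e1, e2, mul_comm]
  rw [Finset.sum_congr rfl fun δ _ => step1 δ, ← Fintype.prod_sum h,
    ← Finset.mul_prod_erase Finset.univ (fun k => ∑ j : Δ k, h k j) (Finset.mem_univ i)]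
  have h1 : ∑ j : Δ i, h i j = ∑ a : Δ i, g i a :=
    Finset.sum_congr rfl fun a _ => by simp [hh]
  have h2 : ∀ k ∈ Finset.univ.erase i, (∑ j : Δ k, h k j) = 1 := by
    intro k hk
    have hki := Finset.ne_of_mem_erase hk
    simp only [hh, dif_neg hki]
    rw [← Complex.ofReal_sum, lamsq k, Complex.ofReal_one]
  rw [h1, Finset.prod_eq_one h2, mul_one]
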